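/- Let G_n be a sequence of graphs with maximum degree bounded by Δ for all n, and H a connected graph. If p_n^{|V(H)|} N(H,G_n) → ∞, then the variance of T(H,G_n) satisfies Var[T(H,G_n)] ≥ c(H) · p_n^{|V(H)|} N(H,G_n) for a constant c(H) > 0 depending only on H (assuming p_n bounded away from 1). -/

import Mathlib

open Finset

noncomputable section

/-- `M_H(s) = ∏_{(i,j)∈E(H)} a_{s_i s_j}`: indicator that the tuple `s` of distinct
vertices maps every edge of `H` to an edge of `G`. -/
def MH {k : ℕ} {V : Type*} (H : SimpleGraph (Fin k)) [DecidableRel H.Adj]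
    (G : SimpleGraph V) [DecidableRel G.Adj] (s : Fin k ↪ V) : ℝ :=
  ∏ i : Fin k, ∏ j : Fin k,
    if H.Adj i j then (if G.Adj (s i) (s j) then 1 else 0) else 1

/-- `N(H,G) = |Aut(H)|⁻¹ ∑_s M_H(s)`: the number of copies of `H` in `G`. -/
def NHG {k : ℕ} {V : Type*} [Fintype V] [DecidableEq V] (H : SimpleGraph (Fin k))
    [DecidableRel H.Adj] (G : SimpleGraph V) [DecidableRel G.Adj] : ℝ :=
  (Nat.card (H ≃g H) : ℝ)⁻¹ * ∑ s : Fin k ↪ V, MH H G s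

/-- `t_H(A)`: the number of copies of `H` in `G` whose vertex set contains `A`. -/
def tH {k : ℕ} {V : Type*} [Fintype V] [DecidableEq V] (H : SimpleGraph (Fin k))
    [DecidableRel H.Adj] (G : SimpleGraph V) [DecidableRel G.Adj] (A : Finset V) : ℝ :=
  (Nat.card (H ≃g H) : ℝ)⁻¹ *
    ∑ s ∈ Finset.univ.filter (fun s : Fin k ↪ V => A ⊆ Finset.univ.map s), MH H G s

/-- Probability weight of a sampling outcome `ω : V → Bool` when each vertex is retained
independently with probability `p`. -/
def wt {V : Type*} [Fintype V] (p : ℝ) (ω : V → Bool) : ℝ :=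
  ∏ v : V, if ω v then p else 1 - p

/-- Expectation under the subgraph sampling model with sampling ratio `p`. -/
def expec {V : Type*} [Fintype V] [DecidableEq V] (p : ℝ) (f : (V → Bool) → ℝ) : ℝ :=
  ∑ ω : V → Bool, wt p ω * f ω

/-- `X_s = ∏_{u ∈ s̄} X_u`: indicator that all entries of the tuple `s` are sampled. -/
def Xs {k : ℕ} {V : Type*} (s : Fin k ↪ V) (ω : V → Bool) : ℝ :=
  ∏ u ∈ Finset.univ.map s, if ω u then 1 else 0

/-- `T(H,G) = |Aut(H)|⁻¹ ∑_s M_H(s) X_s`: the number of copies of `H` spanned by the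
sampled vertices. -/
def TH {k : ℕ} {V : Type*} [Fintype V] [DecidableEq V] (H : SimpleGraph (Fin k))
    [DecidableRel H.Adj] (G : SimpleGraph V) [DecidableRel G.Adj] (ω : V → Bool) : ℝ :=
  (Nat.card (H ≃g H) : ℝ)⁻¹ * ∑ s : Fin k ↪ V, MH H G s * Xs s ω

section aux
variable {V : Type*} [Fintype V] [DecidableEq V]

lemma expec_prod_ind (p : ℝ) (A : Finset V) :
    expec p (fun ω => ∏ u ∈ A, if ω u then (1:ℝ) else 0) = p ^ A.card := by
  unfold expec wt
  have h1 : ∀ ω : V → Bool,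
      (∏ v : V, if ω v then p else 1 - p) * ∏ u ∈ A, (if ω u then (1:ℝ) else 0)
      = ∏ v : V, ((if ω v then p else 1 - p) *
          (if v ∈ A then (if ω v then (1:ℝ) else 0) else 1)) := by
    intro ω
    rw [Finset.prod_mul_distrib, Fintype.prod_ite_mem]
  simp only [h1]
  rw [← Fintype.prod_sum (fun v (b : Bool) => (if b then p else 1 - p) *
      (if v ∈ A then (if b then (1:ℝ) else 0) else 1))]
  have h2 : ∀ v : V, (∑ b : Bool, (if b then p else 1 - p) *
      (if v ∈ A then (if b then (1:ℝ) else 0) else 1)) = if v ∈ A then p else 1 := by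
    intro v
    rw [Fintype.sum_bool]
    by_cases hv : v ∈ A <;> simp [hv]
  simp only [h2]
  rw [Fintype.prod_ite_mem, Finset.prod_const]

lemma expec_const (p : ℝ) (a : ℝ) : expec p (fun _ : V → Bool => a) = a := by
  have := expec_prod_ind p (∅ : Finset V)
  simp only [Finset.prod_empty, Finset.card_empty, pow_zero] at this
  unfold expec at this ⊢
  calc ∑ ω : V → Bool, wt p ω * a = (∑ ω : V → Bool, wt p ω * 1) * a := by
        rw [Finset.sum_mul]; congr 1; ext ω; ring
    _ = a := by rw [this]; ring

lemma expec_sum {ι : Type*} (p : ℝ) (t : Finset ι) (f : ι → (V → Bool) → ℝ) :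
    expec p (fun ω => ∑ i ∈ t, f i ω) = ∑ i ∈ t, expec p (f i) := by
  unfold expec
  rw [Finset.sum_comm]
  congr 1; ext ω; rw [Finset.mul_sum]

lemma expec_smul (p : ℝ) (a : ℝ) (f : (V → Bool) → ℝ) :
    expec p (fun ω => a * f ω) = a * expec p f := by
  unfold expec
  rw [Finset.mul_sum]
  congr 1; ext ω; ring

lemma expec_Xs {k : ℕ} (p : ℝ) (s : Fin k ↪ V) : expec p (Xs s) = p ^ k := by
  have h := expec_prod_ind p (Finset.univ.map s)
  rw [Finset.card_map, Finset.card_univ, Fintype.card_fin] at h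
  rw [← h]
  rfl

lemma Xs_mul {k : ℕ} (s s' : Fin k ↪ V) (ω : V → Bool) :
    Xs s ω * Xs s' ω =
      ∏ u ∈ Finset.univ.map s ∪ Finset.univ.map s', if ω u then (1:ℝ) else 0 := by
  by_cases h : ∀ u ∈ Finset.univ.map s ∪ Finset.univ.map s', ω u = true
  · rw [Finset.prod_eq_one (fun u hu => by simp [h u hu])]
    unfold Xs
    rw [Finset.prod_eq_one (fun u hu => by simp [h u (Finset.mem_union_left _ hu)]),
      Finset.prod_eq_one (fun u hu => by simp [h u (Finset.mem_union_right _ hu)])]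
    norm_num
  · push_neg at h
    obtain ⟨u, hu, hfalse⟩ := h
    rw [Finset.prod_eq_zero hu (by simp [hfalse])]
    rcases Finset.mem_union.mp hu with h1 | h1
    · rw [show Xs s ω = 0 from Finset.prod_eq_zero h1 (by simp [hfalse])]; ring
    · rw [show Xs s' ω = 0 from Finset.prod_eq_zero h1 (by simp [hfalse])]; ring

lemma expec_Xs_mul {k : ℕ} (p : ℝ) (s s' : Fin k ↪ V) :
    expec p (fun ω => Xs s ω * Xs s' ω) =
      p ^ (Finset.univ.map s ∪ Finset.univ.map s').card := by
  have h : (fun ω => Xs s ω * Xs s' ω) = fun ω =>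
      ∏ u ∈ Finset.univ.map s ∪ Finset.univ.map s', if ω u then (1:ℝ) else 0 := by
    ext ω; exact Xs_mul s s' ω
  rw [h, expec_prod_ind]

lemma MH_mem {k : ℕ} (H : SimpleGraph (Fin k)) [DecidableRel H.Adj]
    (G : SimpleGraph V) [DecidableRel G.Adj] (s : Fin k ↪ V) :
    MH H G s = 0 ∨ MH H G s = 1 := by
  unfold MH
  refine Finset.prod_induction _ (fun x => x = 0 ∨ x = 1) ?_ (Or.inr rfl) ?_
  · rintro a b (rfl | rfl) hb <;> simp [hb]
  · intro i _
    refine Finset.prod_induction _ (fun x => x = 0 ∨ x = 1) ?_ (Or.inr rfl) ?_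
    · rintro a b (rfl | rfl) hb <;> simp [hb]
    · intro j _
      by_cases h1 : H.Adj i j <;> by_cases h2 : G.Adj (s i) (s j) <;> simp [h1, h2]

lemma variance_eq {k : ℕ} (H : SimpleGraph (Fin k)) [DecidableRel H.Adj]
    (G : SimpleGraph V) [DecidableRel G.Adj] (p : ℝ) :
    expec p (fun ω => (TH H G ω - expec p (TH H G)) ^ 2) =
      ((Nat.card (H ≃g H) : ℝ)⁻¹)^2 * ∑ s : Fin k ↪ V, ∑ s' : Fin k ↪ V,
        MH H G s * MH H G s' *
          (p ^ (Finset.univ.map s ∪ Finset.univ.map s').card - p ^ k * p ^ k) := by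
  set a := ((Nat.card (H ≃g H) : ℝ)⁻¹) with ha
  set m := expec p (TH H G) with hm
  -- expectation of T
  have hET : m = a * ∑ s : Fin k ↪ V, MH H G s * p ^ k := by
    rw [hm]
    unfold TH
    rw [show (fun ω => a * ∑ s : Fin k ↪ V, MH H G s * Xs s ω)
        = fun ω => a * (∑ s : Fin k ↪ V, MH H G s * Xs s ω) from rfl,
      expec_smul, expec_sum]
    congr 1
    refine Finset.sum_congr rfl fun s _ => ?_
    rw [show (fun ω => MH H G s * Xs s ω) = fun ω => MH H G s * Xs s ω from rfl,
      expec_smul, expec_Xs]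
  -- expectation of T^2
  have hET2 : expec p (fun ω => TH H G ω ^ 2) =
      a^2 * ∑ s : Fin k ↪ V, ∑ s' : Fin k ↪ V, MH H G s * MH H G s' *
        p ^ (Finset.univ.map s ∪ Finset.univ.map s').card := by
    have hexp : ∀ ω, TH H G ω ^ 2 = a^2 * ∑ s : Fin k ↪ V, ∑ s' : Fin k ↪ V,
        MH H G s * MH H G s' * (Xs s ω * Xs s' ω) := by
      intro ω
      unfold TH
      rw [mul_pow, sq (∑ s : Fin k ↪ V, MH H G s * Xs s ω), Finset.sum_mul_sum]
      rw [← ha]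
      congr 1
      refine Finset.sum_congr rfl fun s _ => Finset.sum_congr rfl fun s' _ => by ring
    simp only [hexp]
    rw [expec_smul, expec_sum]
    congr 1
    refine Finset.sum_congr rfl fun s _ => ?_
    rw [expec_sum]
    refine Finset.sum_congr rfl fun s' _ => ?_
    rw [show (fun ω => MH H G s * MH H G s' * (Xs s ω * Xs s' ω))
        = fun ω => (MH H G s * MH H G s') * (Xs s ω * Xs s' ω) from rfl,
      expec_smul, expec_Xs_mul]
  -- variance decomposition
  have hvar : expec p (fun ω => (TH H G ω - m) ^ 2)
      = expec p (fun ω => TH H G ω ^ 2) - m ^ 2 := by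
    have : ∀ ω, (TH H G ω - m)^2 = TH H G ω ^ 2 + (-(2*m)) * TH H G ω + m^2 := by
      intro ω; ring
    simp only [this]
    have e1 : expec p (fun ω => TH H G ω ^ 2 + (-(2*m)) * TH H G ω + m^2)
        = expec p (fun ω => TH H G ω ^ 2) + expec p (fun ω => (-(2*m)) * TH H G ω)
          + expec p (fun _ : V → Bool => m^2) := by
      unfold expec
      rw [← Finset.sum_add_distrib, ← Finset.sum_add_distrib]
      refine Finset.sum_congr rfl fun ω _ => by ring
    rw [e1, expec_smul, expec_const, ← hm]
    ring
  rw [hvar, hET2, hET]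
  rw [Finset.mul_sum]
  rw [show (a * ∑ s : Fin k ↪ V, MH H G s * p ^ k)^2
      = a^2 * ((∑ s : Fin k ↪ V, MH H G s * p ^ k) * (∑ s' : Fin k ↪ V, MH H G s' * p ^ k))
      from by ring, Finset.sum_mul_sum]
  rw [Finset.mul_sum, Finset.mul_sum, ← Finset.sum_sub_distrib]
  refine Finset.sum_congr rfl fun s _ => ?_
  rw [Finset.mul_sum, Finset.mul_sum, Finset.mul_sum, ← Finset.sum_sub_distrib]
  refine Finset.sum_congr rfl fun s' _ => by ring

end aux

/-- For a sequence of graphs with maximum degree uniformly bounded by `Δ` and sampling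
ratios `p_n` bounded away from `1`, if `p_n^{|V(H)|} N(H,G_n) → ∞`, then
`Var[T(H,G_n)] ≥ c(H) p_n^{|V(H)|} N(H,G_n)` for a constant `c > 0`. -/
theorem stmt16 {k : ℕ} (H : SimpleGraph (Fin k)) [DecidableRel H.Adj]
    (hconn : H.Connected) (Δ : ℕ)
    (V : ℕ → Type) [∀ n, Fintype (V n)] [∀ n, DecidableEq (V n)]
    (G : ∀ n, SimpleGraph (V n)) [∀ n, DecidableRel (G n).Adj]
    (hdeg : ∀ n (v : V n), (G n).degree v ≤ Δ)
    (p : ℕ → ℝ) (hp0 : ∀ n, 0 < p n)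
    (c : ℝ) (hc : c < 1) (hpc : ∀ n, p n ≤ c)
    (hlim : Filter.Tendsto (fun n => p n ^ k * NHG H (G n)) Filter.atTop Filter.atTop) :
    ∃ C > (0 : ℝ), ∀ n,
      C * (p n ^ k * NHG H (G n)) ≤
        expec (p n) (fun ω => (TH H (G n) ω - expec (p n) (TH H (G n))) ^ 2) := by
  have hk : 1 ≤ k := by
    have h := hconn.nonempty
    have := Fintype.card_pos_iff.mpr h
    exact (by simpa using this : 0 < k)
  have hfin : Finite (H ≃g H) :=
    Finite.of_injective (fun f => (f : Fin k → Fin k)) DFunLike.coe_injective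
  have hne : Nonempty (H ≃g H) := ⟨SimpleGraph.Iso.refl⟩
  have hcard : (0:ℝ) < (Nat.card (H ≃g H) : ℝ) := by
    exact_mod_cast Nat.card_pos
  set a : ℝ := ((Nat.card (H ≃g H) : ℝ)⁻¹) with ha
  have ha0 : 0 < a := inv_pos.mpr hcard
  refine ⟨(1 - c) * a, mul_pos (by linarith) ha0, fun n => ?_⟩
  have hp1 : p n ≤ 1 := le_of_lt (lt_of_le_of_lt (hpc n) hc)
  have hc0 : 0 < c := lt_of_lt_of_le (hp0 n) (hpc n)
  have hpk_le : p n ^ k ≤ c := by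
    calc p n ^ k ≤ p n ^ 1 := pow_le_pow_of_le_one (le_of_lt (hp0 n)) hp1 hk
      _ = p n := pow_one _
      _ ≤ c := hpc n
  rw [variance_eq]
  -- lower bound the double sum by its diagonal
  have key : ∀ s : Fin k ↪ V n,
      (1 - c) * (p n ^ k) * MH H (G n) s ≤
        ∑ s' : Fin k ↪ V n, MH H (G n) s * MH H (G n) s' *
          (p n ^ (Finset.univ.map s ∪ Finset.univ.map s').card - p n ^ k * p n ^ k) := by
    intro s
    have hterm : ∀ s' : Fin k ↪ V n, s' ∈ (Finset.univ : Finset (Fin k ↪ V n)) →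
        0 ≤ MH H (G n) s * MH H (G n) s' *
          (p n ^ (Finset.univ.map s ∪ Finset.univ.map s').card - p n ^ k * p n ^ k) := by
      intro s' _
      have h1 : 0 ≤ MH H (G n) s := by rcases MH_mem H (G n) s with h | h <;> simp [h]
      have h2 : 0 ≤ MH H (G n) s' := by rcases MH_mem H (G n) s' with h | h <;> simp [h]
      have hcardle : (Finset.univ.map s ∪ Finset.univ.map s').card ≤ k + k := by
        calc (Finset.univ.map s ∪ Finset.univ.map s').card
            ≤ (Finset.univ.map s).card + (Finset.univ.map s').card := Finset.card_union_le _ _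
          _ = k + k := by simp [Finset.card_map]
      have h3 : p n ^ k * p n ^ k ≤ p n ^ (Finset.univ.map s ∪ Finset.univ.map s').card := by
        rw [← pow_add]
        exact pow_le_pow_of_le_one (le_of_lt (hp0 n)) hp1 hcardle
      exact mul_nonneg (mul_nonneg h1 h2) (by linarith)
    have hdiag : (1 - c) * (p n ^ k) * MH H (G n) s ≤
        MH H (G n) s * MH H (G n) s *
          (p n ^ (Finset.univ.map s ∪ Finset.univ.map s).card - p n ^ k * p n ^ k) := by
      rw [Finset.union_self, Finset.card_map, Finset.card_univ, Fintype.card_fin]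
      rcases MH_mem H (G n) s with h | h
      · simp [h]
      · rw [h]
        have : p n ^ k * (1 - c) ≤ p n ^ k * (1 - p n ^ k) := by
          have h0 : 0 < p n ^ k := pow_pos (hp0 n) k
          nlinarith
        nlinarith
    calc (1 - c) * (p n ^ k) * MH H (G n) s
        ≤ MH H (G n) s * MH H (G n) s *
          (p n ^ (Finset.univ.map s ∪ Finset.univ.map s).card - p n ^ k * p n ^ k) := hdiag
      _ ≤ _ := Finset.single_le_sum hterm (Finset.mem_univ s)
  calc (1 - c) * a * (p n ^ k * NHG H (G n))
      = a^2 * ∑ s : Fin k ↪ V n, (1 - c) * (p n ^ k) * MH H (G n) s := by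
        have hsum : ∑ s : Fin k ↪ V n, (1 - c) * (p n ^ k) * MH H (G n) s
            = (1 - c) * (p n ^ k) * ∑ s : Fin k ↪ V n, MH H (G n) s := by
          rw [Finset.mul_sum]
        rw [NHG, ← ha, hsum]; ring
    _ ≤ a^2 * ∑ s : Fin k ↪ V n, ∑ s' : Fin k ↪ V n, MH H (G n) s * MH H (G n) s' *
          (p n ^ (Finset.univ.map s ∪ Finset.univ.map s').card - p n ^ k * p n ^ k) := by
        refine mul_le_mul_of_nonneg_left ?_ (by positivity)
        exact Finset.sum_le_sum fun s _ => key s
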